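/- Let G be a graph whose edges are colored with k colors c_1, …, c_k such that for each i = 1, …, k, the subgraph consisting of the edges of color c_i contains a matching of size 2i. Let v be an arbitrary vertex of G. Then G ∖ {v} contains a rainbow matching of size k, i.e., k pairwise vertex-disjoint edges of k distinct colors, none incident to v. -/

import Mathlib

/-- The graph `G` contains a matching of size `m`: there are `m` pairwise vertex-disjoint
edges. -/
def HasMatchingOfSize {V : Type*} (G : SimpleGraph V) (m : ℕ) : Prop :=
  ∃ p : Fin m → V × V,
    (∀ a, G.Adj (p a).1 (p a).2) ∧
    (∀ a b, a ≠ b →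
      (p a).1 ≠ (p b).1 ∧ (p a).1 ≠ (p b).2 ∧ (p a).2 ≠ (p b).1 ∧ (p a).2 ≠ (p b).2)

theorem greedy_aux {V : Type*} {k : ℕ} (H : Fin k → SimpleGraph V)
    (hmatch : ∀ i : Fin k, HasMatchingOfSize (H i) (2 * ((i : ℕ) + 1)))
    (v : V) :
    ∀ n (hn : n ≤ k), ∃ p : Fin n → V × V,
      (∀ i, (H (Fin.castLE hn i)).Adj (p i).1 (p i).2) ∧
      (∀ i, (p i).1 ≠ v ∧ (p i).2 ≠ v) ∧
      (∀ i j, i ≠ j →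
        (p i).1 ≠ (p j).1 ∧ (p i).1 ≠ (p j).2 ∧ (p i).2 ≠ (p j).1 ∧ (p i).2 ≠ (p j).2) := by
  classical
  intro n
  induction n with
  | zero =>
    intro hn
    exact ⟨fun i => i.elim0, fun i => i.elim0, fun i => i.elim0, fun i => i.elim0⟩
  | succ n ih =>
    intro hn
    obtain ⟨p, hadj, hv, hdis⟩ := ih (Nat.le_of_succ_le hn)
    have hnk : n < k := hn
    obtain ⟨q, hq, hqd⟩ := hmatch ⟨n, hnk⟩
    set S : Finset V :=
      insert v ((Finset.univ.image fun i : Fin n => (p i).1) ∪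
        (Finset.univ.image fun i : Fin n => (p i).2)) with hS
    have hScard : S.card ≤ 2 * n + 1 := by
      calc S.card ≤ ((Finset.univ.image fun i : Fin n => (p i).1) ∪
            (Finset.univ.image fun i : Fin n => (p i).2)).card + 1 :=
            Finset.card_insert_le _ _
        _ ≤ ((Finset.univ.image fun i : Fin n => (p i).1).card +
            (Finset.univ.image fun i : Fin n => (p i).2).card) + 1 := by
            gcongr; exact Finset.card_union_le _ _
        _ ≤ (n + n) + 1 := by
            gcongr <;> exact le_trans (Finset.card_image_le) (by simp)
        _ = 2 * n + 1 := by ring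
    set bad : Finset (Fin (2 * ((n : ℕ) + 1))) :=
      Finset.univ.filter (fun a => (q a).1 ∈ S ∨ (q a).2 ∈ S) with hbad
    have hbadcard : bad.card ≤ S.card := by
      apply Finset.card_le_card_of_injOn (fun a => if (q a).1 ∈ S then (q a).1 else (q a).2)
      · intro a ha
        simp only [Finset.mem_coe] at ha ⊢
        simp only [hbad, Finset.mem_filter] at ha
        split_ifs with h
        · exact h
        · exact ha.2.resolve_left h
      · intro a _ b _ hfe
        by_contra hab
        obtain ⟨h1, h2, h3, h4⟩ := hqd a b hab
        dsimp only at hfe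
        split_ifs at hfe <;> simp_all
    have : ∃ a, a ∉ bad := by
      by_contra h
      push_neg at h
      have := Finset.eq_univ_of_forall h ▸ (hbadcard.trans hScard)
      simp [Finset.card_univ] at this
      omega
    obtain ⟨a, ha⟩ := this
    have ha' : (q a).1 ∉ S ∧ (q a).2 ∉ S := by
      simp only [hbad, Finset.mem_filter, Finset.mem_univ, true_and] at ha
      push_neg at ha; exact ha
    have hvS : v ∈ S := Finset.mem_insert_self _ _
    have hpS : ∀ i : Fin n, (p i).1 ∈ S ∧ (p i).2 ∈ S := by
      intro i
      constructor <;>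
      · apply Finset.mem_insert_of_mem
        simp only [Finset.mem_union, Finset.mem_image]
        first
        | exact Or.inl ⟨i, Finset.mem_univ i, rfl⟩
        | exact Or.inr ⟨i, Finset.mem_univ i, rfl⟩
    refine ⟨Fin.snoc p (q a), ?_, ?_, ?_⟩
    · intro i
      induction i using Fin.lastCases with
      | last =>
        simp only [Fin.snoc_last]
        have : Fin.castLE hn (Fin.last n) = ⟨n, hnk⟩ := rfl
        rw [this]; exact hq a
      | cast i =>
        simp only [Fin.snoc_castSucc]
        have : Fin.castLE hn i.castSucc = Fin.castLE (Nat.le_of_succ_le hn) i := rfl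
        rw [this]; exact hadj i
    · intro i
      induction i using Fin.lastCases with
      | last =>
        simp only [Fin.snoc_last]
        exact ⟨fun h => ha'.1 (h ▸ hvS), fun h => ha'.2 (h ▸ hvS)⟩
      | cast i => simp only [Fin.snoc_castSucc]; exact hv i
    · intro i j hij
      induction i using Fin.lastCases with
      | last =>
        induction j using Fin.lastCases with
        | last => exact absurd rfl hij
        | cast j =>
          simp only [Fin.snoc_last, Fin.snoc_castSucc]
          obtain ⟨hj1, hj2⟩ := hpS j
          exact ⟨fun h => ha'.1 (h ▸ hj1), fun h => ha'.1 (h ▸ hj2),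
            fun h => ha'.2 (h ▸ hj1), fun h => ha'.2 (h ▸ hj2)⟩
      | cast i =>
        induction j using Fin.lastCases with
        | last =>
          simp only [Fin.snoc_last, Fin.snoc_castSucc]
          obtain ⟨hi1, hi2⟩ := hpS i
          exact ⟨fun h => ha'.1 (h.symm ▸ hi1), fun h => ha'.2 (h.symm ▸ hi1),
            fun h => ha'.1 (h.symm ▸ hi2), fun h => ha'.2 (h.symm ▸ hi2)⟩
        | cast j =>
          simp only [Fin.snoc_castSucc]
          exact hdis i j (fun h => hij (h ▸ rfl))


/-- Let the edges of a graph be colored with `k` colors (the color classes being the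
pairwise edge-disjoint graphs `H 0, …, H (k-1)`) such that color `i` (for `i = 1, …, k`,
i.e. zero-indexed `i - 1`) contains a matching of size `2i`. Then for any vertex `v` there
is a rainbow matching of size `k` avoiding `v`: one edge of each color, pairwise
vertex-disjoint, none incident to `v`. -/
theorem greedy_rainbow_matching {V : Type*} {k : ℕ} (H : Fin k → SimpleGraph V)
    (hdisj : ∀ i j, i ≠ j → Disjoint (H i).edgeSet (H j).edgeSet)
    (hmatch : ∀ i : Fin k, HasMatchingOfSize (H i) (2 * ((i : ℕ) + 1)))
    (v : V) :
    ∃ p : Fin k → V × V,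
      (∀ i, (H i).Adj (p i).1 (p i).2) ∧
      (∀ i, (p i).1 ≠ v ∧ (p i).2 ≠ v) ∧
      (∀ i j, i ≠ j →
        (p i).1 ≠ (p j).1 ∧ (p i).1 ≠ (p j).2 ∧ (p i).2 ≠ (p j).1 ∧ (p i).2 ≠ (p j).2) := by
  obtain ⟨p, h1, h2, h3⟩ := greedy_aux H hmatch v k le_rfl
  exact ⟨p, fun i => by simpa using h1 i, h2, h3⟩
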